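/- Let p > 2 be prime, r > 1 an integer with r ≡ 1 (mod p-1), and t = v_p(r-1). Then for every λ ∈ F_p, in the polynomial ring Z_p[x,y], the sum over μ ∈ F_p of ([μ]x - [λ]x + py)^r is congruent to -[λ]·r·p·x^r + r·p·(p-1)·x^{r-1}·y modulo p^{t+2}·Z_p[x,y]. -/

import Mathlib

set_option linter.unusedSectionVars false
set_option maxHeartbeats 1000000


lemma pow3 (pp : ℕ) (hp3 : 3 ≤ pp) : ∀ v : ℕ, 1 ≤ v → v + 2 ≤ pp ^ v := by
  intro v hv
  induction v with
  | zero => omega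
  | succ n ih =>
    rcases Nat.eq_or_lt_of_le hv with h | h
    · simpa [← h] using hp3
    · have hn : 1 ≤ n := by omega
      have := ih hn
      calc n + 1 + 2 ≤ 3 * (n + 2) := by omega
        _ ≤ pp * pp ^ n := Nat.mul_le_mul hp3 this
        _ = pp ^ (n+1) := by ring

lemma val1 (p : ℕ) (hp : p.Prime) (t j c : ℕ) (hj : 1 ≤ j) (hc : c ≠ 0)
    (h : p ^ t ∣ j * c) : p ^ (t + 1) ∣ c * p ^ j := by
  have hj0 : j ≠ 0 := by omega
  have hp0 : p ≠ 0 := hp.ne_zero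
  have hjc : j * c ≠ 0 := Nat.mul_ne_zero hj0 hc
  rw [Nat.Prime.pow_dvd_iff_le_factorization hp hjc, Nat.factorization_mul hj0 hc] at h
  simp only [Finsupp.add_apply] at h
  have hcp : c * p ^ j ≠ 0 := Nat.mul_ne_zero hc (pow_ne_zero _ hp0)
  rw [Nat.Prime.pow_dvd_iff_le_factorization hp hcp, Nat.factorization_mul hc (pow_ne_zero _ hp0),
    hp.factorization_pow]
  simp only [Finsupp.add_apply, Finsupp.single_eq_same]
  set v := j.factorization p with hv
  have hpv : p ^ v ∣ j := Nat.ordProj_dvd j p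
  have hvj : v + 1 ≤ j := by
    have h1 : p ^ v ≤ j := Nat.le_of_dvd (by omega) hpv
    have h2 : v < p ^ v := Nat.lt_pow_self hp.one_lt
    omega
  omega

lemma val2 (p : ℕ) (hp : p.Prime) (hp3 : 3 ≤ p) (t j c : ℕ) (hj : 2 ≤ j) (hc : c ≠ 0)
    (h : p ^ t ∣ (j * (j - 1)) * c) : p ^ (t + 2) ∣ c * p ^ j := by
  have hj0 : j ≠ 0 := by omega
  have hj10 : j - 1 ≠ 0 := by omega
  have hp0 : p ≠ 0 := hp.ne_zero
  have hjj : j * (j - 1) ≠ 0 := Nat.mul_ne_zero hj0 hj10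
  have hjc : j * (j - 1) * c ≠ 0 := Nat.mul_ne_zero hjj hc
  rw [Nat.Prime.pow_dvd_iff_le_factorization hp hjc, Nat.factorization_mul hjj hc,
    Nat.factorization_mul hj0 hj10] at h
  simp only [Finsupp.add_apply] at h
  have hcp : c * p ^ j ≠ 0 := Nat.mul_ne_zero hc (pow_ne_zero _ hp0)
  rw [Nat.Prime.pow_dvd_iff_le_factorization hp hcp, Nat.factorization_mul hc (pow_ne_zero _ hp0),
    hp.factorization_pow]
  simp only [Finsupp.add_apply, Finsupp.single_eq_same]
  set a := j.factorization p with ha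
  set b := (j-1).factorization p with hb
  have hab : a = 0 ∨ b = 0 := by
    by_contra hcon
    push_neg at hcon
    have h1 : p ∣ j := by
      have := Nat.ordProj_dvd j p
      exact dvd_trans (dvd_pow_self p (by omega : j.factorization p ≠ 0)) this
    have h2 : p ∣ (j - 1) := by
      have := Nat.ordProj_dvd (j-1) p
      exact dvd_trans (dvd_pow_self p (by omega : (j-1).factorization p ≠ 0)) this
    have h3 : p ∣ 1 := by
      have := Nat.dvd_sub h1 h2
      simpa [Nat.sub_sub_self (by omega : 1 ≤ j)] using this
    have := Nat.le_of_dvd one_pos h3; omega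
  -- j ≥ max(a,b) + 2
  have hja : a ≠ 0 → a + 2 ≤ j := by
    intro h0
    have h1 : p ^ a ≤ j := Nat.le_of_dvd (by omega) (Nat.ordProj_dvd j p)
    have := pow3 p hp3 a (by omega)
    omega
  have hjb : b ≠ 0 → b + 2 ≤ j := by
    intro h0
    have h1 : p ^ b ≤ j - 1 := Nat.le_of_dvd (by omega) (Nat.ordProj_dvd (j-1) p)
    have := pow3 p hp3 b (by omega)
    omega
  rcases hab with h0 | h0
  · rcases Nat.eq_zero_or_pos b with h1 | h1
    · omega
    · have := hjb (by omega); omega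
  · rcases Nat.eq_zero_or_pos a with h1 | h1
    · omega
    · have := hja (by omega); omega

example : True := trivial

variable {p : ℕ} [Fact p.Prime]

lemma dvd_of_toZMod_eq_zero {z : ℤ_[p]} (h : PadicInt.toZMod z = 0) : (p : ℤ_[p]) ∣ z := by
  have hz : z ∈ RingHom.ker (PadicInt.toZMod : ℤ_[p] →+* ZMod p) := h
  rw [PadicInt.ker_toZMod, PadicInt.maximalIdeal_eq_span_p, Ideal.mem_span_singleton] at hz
  exact hz

lemma teich_unique {x y : ℤ_[p]} (hx : x ^ p = x) (hy : y ^ p = y)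
    (h : PadicInt.toZMod x = PadicInt.toZMod y) : x = y := by
  have key := geom_sum₂_mul x y p
  rw [hx, hy] at key
  have key2 : ((∑ i ∈ Finset.range p, x ^ i * y ^ (p - 1 - i)) - 1) * (x - y) = 0 := by
    rw [sub_mul, key, one_mul, sub_self]
  rcases mul_eq_zero.mp key2 with h0 | h0
  · exfalso
    have h1 : (∑ i ∈ Finset.range p, x ^ i * y ^ (p - 1 - i)) = 1 := by
      linear_combination h0
    have h2 := congrArg (PadicInt.toZMod : ℤ_[p] →+* ZMod p) h1
    simp only [map_sum, map_mul, map_pow, map_one, h] at h2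
    set μ := PadicInt.toZMod y with hμ
    have h3 : ∀ i ∈ Finset.range p, μ ^ i * μ ^ (p - 1 - i) = μ ^ (p-1) := by
      intro i hi
      rw [Finset.mem_range] at hi
      rw [← pow_add]
      congr 1
      omega
    rw [Finset.sum_congr rfl h3, Finset.sum_const, Finset.card_range] at h2
    simp only [nsmul_eq_mul] at h2
    rw [ZMod.natCast_self, zero_mul] at h2
    exact one_ne_zero h2.symm
  · exact sub_eq_zero.mp h0

section T
variable (hp : 2 < p) (T : ZMod p → ℤ_[p]) (hT1 : ∀ μ, T μ ^ p = T μ)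
  (hT2 : ∀ μ, PadicInt.toZMod (T μ) = μ)

include hp hT1 hT2

lemma T_zero : T 0 = 0 := by
  have h0 : (0:ℤ_[p]) ^ p = 0 := zero_pow (Fact.out : p.Prime).ne_zero
  exact teich_unique (hT1 0) h0 (by simp [hT2 0])

lemma T_mul (a b : ZMod p) : T (a * b) = T a * T b := by
  refine teich_unique (hT1 _) ?_ ?_
  · rw [mul_pow, hT1, hT1]
  · simp [hT2, map_mul]

lemma T_ne_zero {ν : ZMod p} (hν : ν ≠ 0) : T ν ≠ 0 := by
  intro h
  apply hν
  rw [← hT2 ν, h, map_zero]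

lemma T_pow_card {ν : ZMod p} (hν : ν ≠ 0) : T ν ^ (p - 1) = 1 := by
  have key : (T ν ^ (p-1) - 1) * T ν = 0 := by
    have : T ν ^ ((p-1)+1) = T ν := by
      rw [Nat.sub_add_cancel (Fact.out : p.Prime).one_lt.le]
      exact hT1 ν
    rw [sub_mul, one_mul, ← pow_succ, this, sub_self]
  rcases mul_eq_zero.mp key with h | h
  · exact sub_eq_zero.mp h
  · exact absurd h (T_ne_zero hp T hT1 hT2 hν)

lemma sum_T : ∑ μ : ZMod p, T μ = 0 := by
  have h2 : (2 : ZMod p) ≠ 0 := by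
    have : ((2:ℕ) : ZMod p) ≠ 0 := by
      rw [Ne, ZMod.natCast_eq_zero_iff]
      intro h
      have := Nat.le_of_dvd (by norm_num) h
      omega
    simpa using this
  have hperm := Equiv.sum_comp (Equiv.mulLeft₀ (2 : ZMod p) h2) T
  have key : T 2 * (∑ μ : ZMod p, T μ) = ∑ μ : ZMod p, T μ := by
    rw [Finset.mul_sum]
    rw [← hperm]
    refine Finset.sum_congr rfl fun ν _ => ?_
    rw [show (Equiv.mulLeft₀ (2:ZMod p) h2) ν = 2 * ν from rfl, T_mul hp T hT1 hT2]
  have key2 : (T 2 - 1) * (∑ μ : ZMod p, T μ) = 0 := by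
    rw [sub_mul, one_mul, key, sub_self]
  rcases mul_eq_zero.mp key2 with h | h
  · exfalso
    have h1 : T 2 = 1 := by linear_combination h
    have h2' := congrArg PadicInt.toZMod h1
    rw [hT2, map_one] at h2'
    have hone : (1 : ZMod p) = 0 := by linear_combination h2'
    exact one_ne_zero hone
  · exact h

end T


open MvPolynomial

/-- Corollary 2.6: for λ ∈ F_p, Σ_{μ ∈ F_p} ([μ]x - [λ]x + py)^r ≡
    -[λ]·r·p·x^r + r·p·(p-1)·x^{r-1}·y (mod p^{t+2}) in ℤ_p[x,y]. -/
theorem stmt_11 (p : ℕ) [Fact p.Prime] (hp : 2 < p) (r : ℕ) (hr : 1 < r)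
    (hcong : (p - 1) ∣ (r - 1)) (t : ℕ) (ht : t = padicValNat p (r - 1))
    (T : ZMod p → ℤ_[p]) (hT1 : ∀ μ, T μ ^ p = T μ)
    (hT2 : ∀ μ, PadicInt.toZMod (T μ) = μ) (lam : ZMod p) :
    let x : MvPolynomial (Fin 2) ℤ_[p] := X 0
    let y : MvPolynomial (Fin 2) ℤ_[p] := X 1
    ∃ D : MvPolynomial (Fin 2) ℤ_[p],
      (∑ μ : ZMod p, (C (T μ) * x - C (T lam) * x + (p : MvPolynomial (Fin 2) ℤ_[p]) * y) ^ r)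
        - (C (-(T lam) * (r : ℤ_[p]) * p) * x ^ r
            + C ((r : ℤ_[p]) * p * ((p : ℤ_[p]) - 1)) * x ^ (r - 1) * y)
      = (p : MvPolynomial (Fin 2) ℤ_[p]) ^ (t + 2) * D := by
  intro x y
  have hprime : p.Prime := Fact.out
  have hp3 : 3 ≤ p := by omega
  -- ℕ-level divisibility facts
  have hpt : (p : ℕ) ^ t ∣ (r - 1) := ht ▸ pow_padicValNat_dvd
  have N2 : ∀ k, 2 ≤ k → k ≤ r → (p:ℕ)^(t+2) ∣ r.choose k * p ^ k := by
    intro k hk2 hkr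
    apply val2 p hprime hp3 t k _ hk2 (Nat.choose_pos hkr |>.ne')
    -- p^t ∣ (k * (k-1)) * r.choose k
    have e1 : r * ((r-1).choose (k-1)) = r.choose k * k := by
      have := Nat.add_one_mul_choose_eq (r-1) (k-1)
      rwa [show (r-1)+1 = r by omega, show (k-1)+1 = k by omega] at this
    have e2 : (r-1) * ((r-2).choose (k-2)) = (r-1).choose (k-1) * (k-1) := by
      have := Nat.add_one_mul_choose_eq (r-2) (k-2)
      rwa [show (r-2)+1 = r-1 by omega, show (k-2)+1 = k-1 by omega] at this
    have e3 : (k * (k-1)) * r.choose k = (r-1) * (r * (r-2).choose (k-2)) := by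
      calc (k * (k-1)) * r.choose k = (r.choose k * k) * (k-1) := by ring
        _ = (r * ((r-1).choose (k-1))) * (k-1) := by rw [e1]
        _ = r * ((r-1).choose (k-1) * (k-1)) := by ring
        _ = r * ((r-1) * (r-2).choose (k-2)) := by rw [e2]
        _ = (r-1) * (r * (r-2).choose (k-2)) := by ring
    rw [e3]
    exact Dvd.dvd.mul_right hpt _
  have N1 : ∀ j, 1 ≤ j → j ≤ r - 1 → (p:ℕ)^(t+1) ∣ (r-1).choose j * p ^ j := by
    intro j hj1 hjr
    apply val1 p hprime t j _ hj1 (Nat.choose_pos hjr |>.ne')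
    have e2 : (r-1) * ((r-2).choose (j-1)) = (r-1).choose j * j := by
      have := Nat.add_one_mul_choose_eq (r-2) (j-1)
      rwa [show (r-2)+1 = r-1 by omega, show (j-1)+1 = j by omega] at this
    have e3 : j * ((r-1).choose j) = (r-1) * ((r-2).choose (j-1)) := by rw [e2]; ring
    rw [e3]
    exact Dvd.dvd.mul_right hpt _
  -- setup
  obtain ⟨m, hm⟩ := hcong
  set a : ZMod p → ℤ_[p] := fun μ => T μ - T lam with ha
  set S : ℕ → ℤ_[p] := fun j => ∑ μ : ZMod p, a μ ^ j with hS
  have hc : ∀ μ, (p : ℤ_[p]) ∣ (a μ - T (μ - lam)) := by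
    intro μ
    apply dvd_of_toZMod_eq_zero
    simp [ha, map_sub, hT2]
  have halam : a lam = 0 := by simp [ha]
  have hb1 : ∀ μ : ZMod p, μ ≠ lam → T (μ - lam) ^ (p - 1) = 1 := by
    intro μ hμ
    exact T_pow_card hp T hT1 hT2 (sub_ne_zero.mpr hμ)
  have hbr1 : ∀ μ : ZMod p, μ ≠ lam → T (μ - lam) ^ (r - 1) = 1 := by
    intro μ hμ
    rw [hm, pow_mul, hb1 μ hμ, one_pow]
  have hbr : ∀ μ : ZMod p, μ ≠ lam → T (μ - lam) ^ r = T (μ - lam) := by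
    intro μ hμ
    rw [show r = (r-1)+1 by omega, pow_succ, hbr1 μ hμ, one_mul]
  have hsumT : ∑ μ : ZMod p, T μ = 0 := sum_T hp T hT1 hT2
  have hsumTsub : ∑ μ : ZMod p, T (μ - lam) = 0 := by
    calc ∑ μ : ZMod p, T (μ - lam) = ∑ μ : ZMod p, T ((Equiv.subRight lam) μ) := rfl
      _ = ∑ μ : ZMod p, T μ := Equiv.sum_comp _ T
      _ = 0 := hsumT
  have hT0 : T 0 = 0 := T_zero hp T hT1 hT2
  -- the three key congruences
  have hsuma : ∑ μ : ZMod p, a μ = - (p:ℤ_[p]) * T lam := by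
    have h0 : ∑ μ : ZMod p, a μ = (∑ μ : ZMod p, T μ) - (Finset.univ : Finset (ZMod p)).card • T lam := by
      rw [ha, Finset.sum_sub_distrib, Finset.sum_const]
    rw [h0, hsumT, Finset.card_univ, ZMod.card, nsmul_eq_mul]
    ring
  have hdiffsum : ∀ (f : ZMod p → ℤ_[p]),
      ∑ μ : ZMod p, f μ = (∑ μ ∈ (Finset.univ \ {lam} : Finset (ZMod p)), f μ) + f lam :=
    fun f => Finset.sum_eq_sum_sdiff_singleton_add (Finset.mem_univ lam) f
  have hsuma' : ∑ μ ∈ (Finset.univ \ {lam} : Finset (ZMod p)), a μ = - (p:ℤ_[p]) * T lam := by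
    have h0 := hdiffsum a
    rw [hsuma, halam] at h0
    linear_combination -h0
  have hsumTsub' : ∑ μ ∈ (Finset.univ \ {lam} : Finset (ZMod p)), T (μ - lam) = 0 := by
    have h0 := hdiffsum (fun μ => T (μ - lam))
    simp only [sub_self, hT0] at h0
    rw [hsumTsub] at h0
    linear_combination -h0
  have hmemne : ∀ μ : ZMod p, μ ∈ (Finset.univ \ ({lam} : Finset (ZMod p))) → μ ≠ lam := by
    intro μ hμ
    simpa [Finset.mem_sdiff] using hμ
  have hSr : (p:ℤ_[p])^(t+2) ∣ S r - (-(T lam) * (r:ℤ_[p]) * p) := by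
    have h1 : ∑ μ ∈ (Finset.univ \ {lam} : Finset (ZMod p)), a μ ^ r = S r := by
      have h0 := hdiffsum (fun μ => a μ ^ r)
      simp only [halam, zero_pow (by omega : r ≠ 0), add_zero] at h0
      simp only [hS]
      linear_combination -h0
    have hdiff : S r - (-(T lam) * (r:ℤ_[p]) * p)
        = ∑ μ ∈ (Finset.univ \ {lam} : Finset (ZMod p)),
            (a μ ^ r - T (μ - lam) - (a μ - T (μ - lam)) * r) := by
      rw [Finset.sum_sub_distrib, Finset.sum_sub_distrib, ← Finset.sum_mul,
        Finset.sum_sub_distrib, hsumTsub', hsuma', h1]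
      ring
    rw [hdiff]
    refine Finset.dvd_sum fun μ hμ => ?_
    have hμlam := hmemne μ hμ
    obtain ⟨cμ, hcμ⟩ := hc μ
    have haμ : a μ = (p:ℤ_[p]) * cμ + T (μ - lam) := by linear_combination hcμ
    have expandA : a μ ^ r - T (μ - lam) - (a μ - T (μ - lam)) * r
        = ∑ k ∈ Finset.Ico 2 (r+1),
            ((p:ℤ_[p]) * cμ) ^ k * T (μ - lam) ^ (r - k) * (r.choose k : ℤ_[p]) := by
      conv_lhs => rw [hcμ, haμ, add_pow, Finset.range_eq_Ico,
        Finset.sum_eq_sum_Ico_succ_bot (by omega : 0 < r+1),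
        Finset.sum_eq_sum_Ico_succ_bot (by omega : 1 < r+1)]
      norm_num [hbr μ hμlam, hbr1 μ hμlam]
    rw [expandA]
    refine Finset.dvd_sum fun k hk => ?_
    rw [Finset.mem_Ico] at hk
    have h2 := Nat.cast_dvd_cast (α := ℤ_[p]) (N2 k hk.1 (by omega))
    push_cast at h2
    have harr : ((p:ℤ_[p]) * cμ) ^ k * T (μ - lam) ^ (r - k) * (r.choose k : ℤ_[p])
        = ((r.choose k : ℤ_[p]) * (p:ℤ_[p]) ^ k) * (cμ ^ k * T (μ - lam) ^ (r - k)) := by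
      rw [mul_pow]
      ring
    rw [harr]
    exact h2.mul_right _
  have hSr1 : (p:ℤ_[p])^(t+1) ∣ S (r-1) - ((p:ℤ_[p]) - 1) := by
    have h1 : ∑ μ ∈ (Finset.univ \ {lam} : Finset (ZMod p)), a μ ^ (r-1) = S (r-1) := by
      have h0 := hdiffsum (fun μ => a μ ^ (r-1))
      simp only [halam, zero_pow (by omega : r - 1 ≠ 0), add_zero] at h0
      simp only [hS]
      linear_combination -h0
    have hcard : (((Finset.univ \ {lam} : Finset (ZMod p))).card : ℤ_[p]) = (p:ℤ_[p]) - 1 := by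
      rw [Finset.card_sdiff_of_subset (Finset.subset_univ _), Finset.card_univ, ZMod.card,
        Finset.card_singleton, Nat.cast_sub (by omega : 1 ≤ p), Nat.cast_one]
    have hdiff : S (r-1) - ((p:ℤ_[p]) - 1)
        = ∑ μ ∈ (Finset.univ \ {lam} : Finset (ZMod p)), (a μ ^ (r-1) - 1) := by
      rw [Finset.sum_sub_distrib, Finset.sum_const, nsmul_eq_mul, mul_one, h1, hcard]
    rw [hdiff]
    refine Finset.dvd_sum fun μ hμ => ?_
    have hμlam := hmemne μ hμ
    obtain ⟨cμ, hcμ⟩ := hc μ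
    have haμ : a μ = (p:ℤ_[p]) * cμ + T (μ - lam) := by linear_combination hcμ
    have expandB : a μ ^ (r-1) - 1
        = ∑ j ∈ Finset.Ico 1 r,
            ((p:ℤ_[p]) * cμ) ^ j * T (μ - lam) ^ (r - 1 - j) * ((r-1).choose j : ℤ_[p]) := by
      conv_lhs => rw [haμ, add_pow, show r - 1 + 1 = r from by omega, Finset.range_eq_Ico,
        Finset.sum_eq_sum_Ico_succ_bot (by omega : 0 < r)]
      norm_num [hbr1 μ hμlam]
    rw [expandB]
    refine Finset.dvd_sum fun j hj => ?_
    rw [Finset.mem_Ico] at hj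
    have h2 := Nat.cast_dvd_cast (α := ℤ_[p]) (N1 j hj.1 (by omega))
    push_cast at h2
    have harr : ((p:ℤ_[p]) * cμ) ^ j * T (μ - lam) ^ (r - 1 - j) * (((r-1)).choose j : ℤ_[p])
        = (((r-1).choose j : ℤ_[p]) * (p:ℤ_[p]) ^ j) * (cμ ^ j * T (μ - lam) ^ (r - 1 - j)) := by
      rw [mul_pow]
      ring
    rw [harr]
    exact h2.mul_right _
  -- polynomial part
  obtain ⟨d0, hd0⟩ := hSr
  obtain ⟨d1, hd1⟩ := hSr1
  have hS0 : S r = -(T lam) * (r:ℤ_[p]) * p + (p:ℤ_[p])^(t+2) * d0 := by linear_combination hd0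
  have hS1' : S (r-1) = ((p:ℤ_[p]) - 1) + (p:ℤ_[p])^(t+1) * d1 := by linear_combination hd1
  have expand : (∑ μ : ZMod p, (C (T μ) * x - C (T lam) * x
        + (p : MvPolynomial (Fin 2) ℤ_[p]) * y) ^ r)
      = ∑ k ∈ Finset.range (r+1),
          ((p : MvPolynomial (Fin 2) ℤ_[p]) * y)^k * (C (S (r-k)) * x^(r-k))
            * (r.choose k : MvPolynomial (Fin 2) ℤ_[p]) := by
    have h1 : ∀ μ : ZMod p, C (T μ) * x - C (T lam) * x + (p : MvPolynomial (Fin 2) ℤ_[p]) * y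
        = (p : MvPolynomial (Fin 2) ℤ_[p]) * y + C (a μ) * x := by
      intro μ
      rw [ha]
      simp only [map_sub]
      ring
    calc (∑ μ : ZMod p, (C (T μ) * x - C (T lam) * x + (p : MvPolynomial (Fin 2) ℤ_[p]) * y) ^ r)
        = ∑ μ : ZMod p, ∑ k ∈ Finset.range (r+1),
            ((p : MvPolynomial (Fin 2) ℤ_[p]) * y)^k * (C (a μ) * x)^(r-k)
              * (r.choose k : MvPolynomial (Fin 2) ℤ_[p]) := by
          refine Finset.sum_congr rfl fun μ _ => ?_
          rw [h1 μ, add_pow]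
      _ = ∑ k ∈ Finset.range (r+1), ∑ μ : ZMod p,
            ((p : MvPolynomial (Fin 2) ℤ_[p]) * y)^k * (C (a μ) * x)^(r-k)
              * (r.choose k : MvPolynomial (Fin 2) ℤ_[p]) := Finset.sum_comm
      _ = ∑ k ∈ Finset.range (r+1),
            ((p : MvPolynomial (Fin 2) ℤ_[p]) * y)^k * (C (S (r-k)) * x^(r-k))
              * (r.choose k : MvPolynomial (Fin 2) ℤ_[p]) := by
          refine Finset.sum_congr rfl fun k _ => ?_
          have h2 : ∀ μ : ZMod p,
              ((p : MvPolynomial (Fin 2) ℤ_[p]) * y)^k * (C (a μ) * x)^(r-k)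
                * (r.choose k : MvPolynomial (Fin 2) ℤ_[p])
              = (((p : MvPolynomial (Fin 2) ℤ_[p]) * y)^k * x^(r-k)
                  * (r.choose k : MvPolynomial (Fin 2) ℤ_[p])) * C (a μ ^ (r-k)) := by
            intro μ
            rw [mul_pow, map_pow]
            ring
          rw [Finset.sum_congr rfl (fun μ _ => h2 μ), ← Finset.mul_sum, ← map_sum]
          simp only [hS]
          ring
  have htail : ((p : MvPolynomial (Fin 2) ℤ_[p])) ^ (t+2)
      ∣ ∑ k ∈ Finset.Ico 2 (r+1),
          ((p : MvPolynomial (Fin 2) ℤ_[p]) * y)^k * (C (S (r-k)) * x^(r-k))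
            * (r.choose k : MvPolynomial (Fin 2) ℤ_[p]) := by
    refine Finset.dvd_sum fun k hk => ?_
    rw [Finset.mem_Ico] at hk
    have h2 := Nat.cast_dvd_cast (α := MvPolynomial (Fin 2) ℤ_[p]) (N2 k hk.1 (by omega))
    push_cast at h2
    have h3 : ((p : MvPolynomial (Fin 2) ℤ_[p]) * y)^k * (C (S (r-k)) * x^(r-k))
          * (r.choose k : MvPolynomial (Fin 2) ℤ_[p])
        = ((r.choose k : MvPolynomial (Fin 2) ℤ_[p]) * (p : MvPolynomial (Fin 2) ℤ_[p])^k)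
            * (y^k * (C (S (r-k)) * x^(r-k))) := by
      rw [mul_pow]
      ring
    rw [h3]
    exact h2.mul_right _
  obtain ⟨W, hW⟩ := htail
  refine ⟨C d0 * x^r + (r : MvPolynomial (Fin 2) ℤ_[p]) * (C d1 * (x^(r-1)*y)) + W, ?_⟩
  rw [expand, Finset.range_eq_Ico,
    Finset.sum_eq_sum_Ico_succ_bot (by omega : 0 < r+1),
    Finset.sum_eq_sum_Ico_succ_bot (by omega : 1 < r+1),
    (by norm_num : (1:ℕ)+1 = 2), hW]
  simp only [Nat.sub_zero]
  rw [hS0, hS1']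
  simp only [map_add, map_mul, map_neg, map_sub, map_one, map_pow, map_natCast,
    Nat.choose_zero_right, Nat.choose_one_right, Nat.cast_one, pow_zero, pow_one]
  ring
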